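/- For any summable real sequence a, the sequence R(a) obtained by applying the transfer operators R_j in increasing order of j satisfies R(a)_i = min(1, (∑_{j ≤ i} a_j) − ∑_{j < i} R(a)_j) for every i. -/

import Mathlib

/-- The cell-transfer operator `R_j`: it transfers the excess content (above
capacity 1) of cell `j` to cell `j+1`, leaving all other cells unchanged. -/
noncomputable def Rj (j : ℤ) (a : ℤ → ℝ) : ℤ → ℝ := fun i =>
  if i = j then min 1 (a j)
  else if i = j + 1 then a (j + 1) + a j - min 1 (a j)
  else a i

/-- The composition `R_n ∘ ⋯ ∘ R_{m+1} ∘ R_m` of the transfer operators,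
applied in increasing order of the index. -/
noncomputable def Rcomp (m n : ℤ) (a : ℤ → ℝ) : ℤ → ℝ :=
  ((Finset.Icc m n).sort (· ≤ ·)).foldl (fun s j => Rj j s) a

lemma Rcomp_of_lt (m n : ℤ) (h : n < m) (a : ℤ → ℝ) : Rcomp m n a = a := by
  unfold Rcomp
  rw [Finset.Icc_eq_empty (by omega), Finset.sort_empty]
  rfl

lemma sort_Icc_succ (m n : ℤ) (h : m ≤ n + 1) :
    (Finset.Icc m (n+1)).sort (· ≤ ·) = (Finset.Icc m n).sort (· ≤ ·) ++ [n+1] := by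
  have h1 : Finset.Icc m (n+1) = insert (n+1) (Finset.Icc m n) := by
      ext x; simp only [Finset.mem_Icc, Finset.mem_insert]; omega
  have h2 : (n+1) ∉ Finset.Icc m n := by simp [Finset.mem_Icc]
  have hperm : List.Perm ((Finset.Icc m (n+1)).sort (· ≤ ·))
      ((Finset.Icc m n).sort (· ≤ ·) ++ [n+1]) := by
    refine (Finset.sort_perm_toList (α := ℤ) (s := _) (r := (· ≤ ·))).trans ?_
    rw [h1]
    refine (Finset.toList_insert h2).trans ?_
    refine (List.Perm.cons _ (Finset.sort_perm_toList (α := ℤ) (s := _) (r := (· ≤ ·))).symm).trans ?_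
    exact (List.perm_append_singleton _ _).symm
  refine List.Perm.eq_of_pairwise' (Finset.pairwise_sort _ _) ?_ hperm
  · rw [List.pairwise_append]
    refine ⟨Finset.pairwise_sort _ _, List.pairwise_singleton _ _, ?_⟩
    intro x hx y hy
    simp only [List.mem_singleton] at hy
    have := (Finset.mem_sort (α := ℤ) (s := _) (r := (· ≤ ·))).1 hx
    rw [Finset.mem_Icc] at this
    omega

lemma Rcomp_succ (m n : ℤ) (h : m ≤ n + 1) (a : ℤ → ℝ) :
    Rcomp m (n+1) a = Rj (n+1) (Rcomp m n a) := by
  unfold Rcomp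
  rw [sort_Icc_succ m n h, List.foldl_append]
  rfl

lemma Rj_self (j : ℤ) (a : ℤ → ℝ) : Rj j a j = min 1 (a j) := if_pos rfl

lemma Rj_next (j : ℤ) (a : ℤ → ℝ) : Rj j a (j+1) = a (j+1) + a j - min 1 (a j) := by
  unfold Rj
  rw [if_neg (by omega), if_pos rfl]

lemma Rj_apply_ne (j : ℤ) (a : ℤ → ℝ) (i : ℤ) (h1 : i ≠ j) (h2 : i ≠ j + 1) :
    Rj j a i = a i := by
  simp [Rj, h1, h2]


/-- For any finitely supported real sequence `a` (with support
bounded below by `m`), the sequence `R(a)` obtained by applying the transfer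
operators `R_j` in increasing order of `j` (the value `R(a) i` is stable once
all `R_j` with `j ≤ i` have been applied, i.e. `R(a) i = Rcomp m i a i`)
satisfies `R(a) i = min (1, (∑_{j ≤ i} a j) − ∑_{j < i} R(a) j)` for every `i`. -/
theorem stmt_1 (a : ℤ → ℝ) (hfin : (Function.support a).Finite)
    (m : ℤ) (hm : ∀ j < m, a j = 0) :
    ∀ i : ℤ, Rcomp m i a i =
      min 1 ((∑ᶠ j ∈ Set.Iic i, a j) - ∑ᶠ j ∈ Set.Iio i, Rcomp m j a j) := by
  -- the "final" sequence
  set c : ℤ → ℝ := fun j => Rcomp m j a j with hc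
  have hc0 : ∀ j < m, c j = 0 := by
    intro j hj
    simp only [hc, Rcomp_of_lt m j hj a]
    exact hm j hj
  -- finsum conversions
  have hsumA : ∀ i : ℤ, ∑ᶠ j ∈ Set.Iic i, a j = ∑ j ∈ Finset.Icc m i, a j := by
    intro i
    apply finsum_mem_eq_sum_of_inter_support_eq
    ext x
    simp only [Set.mem_inter_iff, Set.mem_Iic, Function.mem_support, Finset.coe_Icc,
      Set.mem_Icc]
    constructor
    · rintro ⟨hx, hx2⟩
      refine ⟨⟨?_, hx⟩, hx2⟩
      by_contra h
      exact hx2 (hm x (by omega))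
    · rintro ⟨⟨_, hx⟩, hx2⟩; exact ⟨hx, hx2⟩
  have hsumC : ∀ i : ℤ, ∑ᶠ j ∈ Set.Iio i, c j = ∑ j ∈ Finset.Icc m (i-1), c j := by
    intro i
    apply finsum_mem_eq_sum_of_inter_support_eq
    ext x
    simp only [Set.mem_inter_iff, Set.mem_Iio, Function.mem_support, Finset.coe_Icc,
      Set.mem_Icc]
    constructor
    · rintro ⟨hx, hx2⟩
      refine ⟨⟨?_, by omega⟩, hx2⟩
      by_contra h
      exact hx2 (hc0 x (by omega))
    · rintro ⟨⟨_, hx⟩, hx2⟩; exact ⟨by omega, hx2⟩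
  -- key invariant
  have key : ∀ n : ℤ, m - 1 ≤ n →
      (∀ i : ℤ, n + 1 < i → Rcomp m n a i = a i) ∧
      Rcomp m n a (n+1) = (∑ j ∈ Finset.Icc m (n+1), a j) - ∑ j ∈ Finset.Icc m n, c j := by
    intro n
    refine Int.le_induction (motive := fun n _ => (∀ i : ℤ, n + 1 < i → Rcomp m n a i = a i) ∧
      Rcomp m n a (n+1) = (∑ j ∈ Finset.Icc m (n+1), a j) - ∑ j ∈ Finset.Icc m n, c j)
      ?_ ?_ n
    · rw [Rcomp_of_lt m (m-1) (by omega) a]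
      refine ⟨fun i _ => rfl, ?_⟩
      rw [Finset.Icc_eq_empty (by omega : ¬ m ≤ m - 1), Finset.sum_empty]
      have : m - 1 + 1 = m := by ring
      rw [this, Finset.Icc_self, Finset.sum_singleton, sub_zero]
    · intro n hn ih
      have hstep := Rcomp_succ m n (by omega) a
      obtain ⟨ih1, ih2⟩ := ih
      constructor
      · intro i hi
        rw [hstep, Rj_apply_ne _ _ i (by omega) (by omega)]
        exact ih1 i (by omega)
      · have hcn1 : c (n+1) = min 1 (Rcomp m n a (n+1)) := by
          show Rcomp m (n+1) a (n+1) = _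
          rw [hstep, Rj_self]
        have h2 : Rcomp m (n+1) a (n+1+1) =
            Rcomp m n a (n+1+1) + Rcomp m n a (n+1) - min 1 (Rcomp m n a (n+1)) := by
          rw [hstep, Rj_next]
        have hcn2 : c (n+1) = min 1 ((∑ j ∈ Finset.Icc m (n+1), a j)
            - ∑ j ∈ Finset.Icc m n, c j) := by rw [hcn1, ih2]
        rw [h2, ih1 (n+1+1) (by omega), ih2]
        have hA : ∑ j ∈ Finset.Icc m (n+1+1), a j
            = (∑ j ∈ Finset.Icc m (n+1), a j) + a (n+1+1) := by
          have : Finset.Icc m (n+1+1) = insert (n+1+1) (Finset.Icc m (n+1)) := by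
            ext x; simp only [Finset.mem_Icc, Finset.mem_insert]; omega
          rw [this, Finset.sum_insert (by simp [Finset.mem_Icc]), add_comm]
        have hC : ∑ j ∈ Finset.Icc m (n+1), c j
            = (∑ j ∈ Finset.Icc m n, c j) + c (n+1) := by
          have : Finset.Icc m (n+1) = insert (n+1) (Finset.Icc m n) := by
            ext x; simp only [Finset.mem_Icc, Finset.mem_insert]; omega
          rw [this, Finset.sum_insert (by simp [Finset.mem_Icc]), add_comm]
        rw [hA, hC, ← hcn2]
        ring
  intro i
  rw [hsumA, hsumC]
  rcases lt_or_ge i m with hi | hi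
  · rw [Rcomp_of_lt m i hi a, hm i hi,
      Finset.Icc_eq_empty (by omega : ¬ m ≤ i), Finset.sum_empty,
      Finset.Icc_eq_empty (by omega : ¬ m ≤ i - 1), Finset.sum_empty]
    norm_num
  · obtain ⟨k1, k2⟩ := key (i-1) (by omega)
    have h1 : Rcomp m i a i = min 1 (Rcomp m (i-1) a i) := by
      have := Rcomp_succ m (i-1) (by omega) a
      have hi1 : i - 1 + 1 = i := by ring
      rw [hi1] at this
      rw [this]
      exact Rj_self _ _
    have hi1 : i - 1 + 1 = i := by ring
    rw [hi1] at k2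
    rw [h1, k2]
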